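/- Let C_0 = {(log|z_1|,…,log|z_n|) : |z_1|² + ⋯ + |z_n|² < 1} ⊂ ℝⁿ and let f be a convex function on C_0 increasing in each variable (extended by +∞ outside C_0). Fix a ∈ C_0 and define f̂(w) := lim_{t→+∞} f(a + tw)/t for w ∈ ℝⁿ_{≤0} \ {0}, and the Newton convex body Γ(f) := {λ ∈ ℝⁿ : ⟨λ, ·⟩ ≤ f + O(1) on C_0}. Then the closure of Γ(f) equals Γ(f̂), which equals the set {λ ∈ ℝⁿ : ⟨λ, w⟩ ≤ f̂(w) for all w}. -/

import Mathlib

open Filter MeasureTheory Metric Set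
open scoped ENNReal Topology

noncomputable section

/-- The logarithmic image of the unit ball:
`C₀ = {(log|z₁|,…,log|zₙ|) : Σ|zᵢ|² < 1} = {x : Σ e^{2xᵢ} < 1}`. -/
def C0 (n : ℕ) : Set (Fin n → ℝ) := {x | ∑ i, Real.exp (2 * x i) < 1}

namespace NewtonAux

variable {n : ℕ}

lemma isOpen_C0 : IsOpen (C0 n) := by
  have hc : Continuous fun x : Fin n → ℝ => ∑ i, Real.exp (2 * x i) :=
    continuous_finset_sum _ fun i _ =>
      Real.continuous_exp.comp (continuous_const.mul (continuous_apply i))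
  exact isOpen_lt hc continuous_const

lemma mem_C0_of_le {x y : Fin n → ℝ} (hy : y ∈ C0 n) (h : ∀ i, x i ≤ y i) : x ∈ C0 n := by
  have hy' : ∑ i, Real.exp (2 * y i) < 1 := hy
  show ∑ i, Real.exp (2 * x i) < 1
  refine lt_of_le_of_lt ?_ hy'
  exact Finset.sum_le_sum fun i _ => Real.exp_le_exp.2 (by linarith [h i])

lemma neg_of_mem_C0 {x : Fin n → ℝ} (hx : x ∈ C0 n) (i : Fin n) : x i < 0 := by
  have h1 : Real.exp (2 * x i) ≤ ∑ j, Real.exp (2 * x j) :=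
    Finset.single_le_sum (f := fun j => Real.exp (2 * x j))
      (fun j _ => (Real.exp_pos _).le) (Finset.mem_univ i)
  have hx' : ∑ j, Real.exp (2 * x j) < 1 := hx
  have h2 : Real.exp (2 * x i) < 1 := lt_of_le_of_lt h1 hx'
  have := Real.exp_lt_one_iff.1 h2
  linarith

lemma clm_eq_sum (F : (Fin n → ℝ) →L[ℝ] ℝ) (y : Fin n → ℝ) :
    F y = ∑ i, y i * F (Pi.single i 1) := by
  have hy : y = ∑ i, y i • (Pi.single i 1 : Fin n → ℝ) := by
    funext j
    simp [Finset.sum_apply, Pi.single_apply]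
  conv_lhs => rw [hy]
  rw [map_sum]
  simp [smul_eq_mul]

/-- Existence of a subgradient of a convex function at any point of the open set `C0 n`. -/
lemma exists_subgradient (f : (Fin n → ℝ) → ℝ) (hconv : ConvexOn ℝ (C0 n) f)
    {x₀ : Fin n → ℝ} (hx₀ : x₀ ∈ C0 n) :
    ∃ l : Fin n → ℝ, ∀ x ∈ C0 n,
      (∑ i, l i * x i) - f x ≤ (∑ i, l i * x₀ i) - f x₀ := by
  have hcont : ContinuousOn f (C0 n) := hconv.continuousOn isOpen_C0
  set S : Set ((Fin n → ℝ) × ℝ) := {p | p.1 ∈ C0 n ∧ f p.1 < p.2} with hS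
  have hSopen : IsOpen S := by
    rw [isOpen_iff_mem_nhds]
    rintro p ⟨hp1, hp2⟩
    have hc1 : ∀ᶠ q : (Fin n → ℝ) × ℝ in 𝓝 p, q.1 ∈ C0 n :=
      continuousAt_fst.preimage_mem_nhds (isOpen_C0.mem_nhds hp1)
    have hfc : ContinuousAt (fun q : (Fin n → ℝ) × ℝ => f q.1 - q.2) p :=
      ((hcont.continuousAt (isOpen_C0.mem_nhds hp1)).comp continuousAt_fst).sub continuousAt_snd
    have hc2 : ∀ᶠ q : (Fin n → ℝ) × ℝ in 𝓝 p, f q.1 - q.2 < 0 :=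
      hfc (Iio_mem_nhds (by simpa using sub_neg.2 hp2))
    filter_upwards [hc1, hc2] with q h1 h2
    exact ⟨h1, by simpa [sub_neg] using h2⟩
  have hSconv : Convex ℝ S := by
    rintro ⟨x, r⟩ ⟨hx, hfx⟩ ⟨y, s⟩ ⟨hy, hfy⟩ α β hα hβ hαβ
    refine ⟨hconv.1 hx hy hα hβ hαβ, ?_⟩
    have h2 := hconv.2 hx hy hα hβ hαβ
    simp only [smul_eq_mul, Prod.smul_mk, Prod.mk_add_mk] at h2 ⊢
    have hkey : α * f x + β * f y < α * r + β * s := by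
      rcases eq_or_lt_of_le hα with h | h
      · have hβ1 : β = 1 := by linarith
        rw [← h, hβ1]; simpa using hfy
      · have h1 : α * f x < α * r := mul_lt_mul_of_pos_left hfx h
        have h2' : β * f y ≤ β * s := mul_le_mul_of_nonneg_left hfy.le hβ
        linarith
    linarith
  have hp₀ : ((x₀, f x₀) : (Fin n → ℝ) × ℝ) ∉ S := fun h => lt_irrefl _ h.2
  obtain ⟨F, hF⟩ := geometric_hahn_banach_open_point hSconv hSopen hp₀
  set β : ℝ := F (0, 1) with hβdef
  have hβneg : β < 0 := by
    have h1 : ((x₀, f x₀ + 1) : (Fin n → ℝ) × ℝ) ∈ S := ⟨hx₀, by show f x₀ < f x₀ + 1; linarith⟩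
    have h2 := hF _ h1
    have h3 : ((x₀, f x₀ + 1) : (Fin n → ℝ) × ℝ) = (x₀, f x₀) + (0, 1) := by
      simp [Prod.ext_iff]
    rw [h3, map_add] at h2
    linarith
  have key : ∀ x ∈ C0 n, F (x, f x) ≤ F (x₀, f x₀) := by
    intro x hx
    by_contra hlt
    push_neg at hlt
    set ε : ℝ := (F (x, f x) - F (x₀, f x₀)) / (-β) with hεdef
    have hεpos : 0 < ε := div_pos (by linarith) (by linarith)
    have h1 : ((x, f x + ε) : (Fin n → ℝ) × ℝ) ∈ S := ⟨hx, by show f x < f x + ε; linarith⟩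
    have h2 := hF _ h1
    have h3 : ((x, f x + ε) : (Fin n → ℝ) × ℝ) = (x, f x) + ε • (0, 1) := by
      simp [Prod.ext_iff]
    rw [h3, map_add, F.map_smul, smul_eq_mul] at h2
    have hβ0 : β ≠ 0 := ne_of_lt hβneg
    have h4 : ε * β = -(F (x, f x) - F (x₀, f x₀)) := by
      rw [hεdef]; field_simp [hβ0]
    rw [← hβdef] at h2
    linarith
  set G : (Fin n → ℝ) →L[ℝ] ℝ := F.comp (ContinuousLinearMap.inl ℝ (Fin n → ℝ) ℝ) with hGdef
  have hdec : ∀ (x : Fin n → ℝ) (r : ℝ), F (x, r) = G x + r * β := by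
    intro x r
    have h1 : ((x, r) : (Fin n → ℝ) × ℝ) = (x, 0) + r • (0, 1) := by
      simp [Prod.ext_iff]
    rw [h1, map_add, F.map_smul, smul_eq_mul]
    rfl
  have hD : (0:ℝ) < -β := by linarith
  refine ⟨fun i => G (Pi.single i 1) / (-β), fun x hx => ?_⟩
  have h1 := key x hx
  rw [hdec, hdec] at h1
  have hsum : ∀ y : Fin n → ℝ,
      (∑ i, (G (Pi.single i 1) / (-β)) * y i) = G y / (-β) := by
    intro y
    rw [clm_eq_sum G y, Finset.sum_div]
    exact Finset.sum_congr rfl fun i _ => by ring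
  rw [hsum, hsum]
  have h1' : G x - f x * (-β) ≤ G x₀ - f x₀ * (-β) := by linarith
  have h2 := mul_le_mul_of_nonneg_right h1' (inv_nonneg.2 hD.le)
  have hβ0 : β ≠ 0 := ne_of_lt hβneg
  have e1 : (G x - f x * (-β)) * (-β)⁻¹ = G x * (-β)⁻¹ - f x := by
    field_simp; ring
  have e2 : (G x₀ - f x₀ * (-β)) * (-β)⁻¹ = G x₀ * (-β)⁻¹ - f x₀ := by
    field_simp; ring
  rw [e1, e2] at h2
  rw [div_eq_mul_inv, div_eq_mul_inv]
  exact h2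

end NewtonAux

theorem closure_newtonBody_eq (n : ℕ) (f : (Fin n → ℝ) → ℝ) (fhat : (Fin n → ℝ) → ℝ)
    (hconv : ConvexOn ℝ (C0 n) f)
    (hmono : ∀ x ∈ C0 n, ∀ y ∈ C0 n, (∀ i, x i ≤ y i) → f x ≤ f y)
    (a : Fin n → ℝ) (ha : a ∈ C0 n)
    (hfhat : ∀ w : Fin n → ℝ, (∀ i, w i ≤ 0) → w ≠ 0 →
      Tendsto (fun t : ℝ => f (a + t • w) / t) atTop (𝓝 (fhat w))) :
    closure {l : Fin n → ℝ | ∃ C : ℝ, ∀ x ∈ C0 n, ∑ i, l i * x i ≤ f x + C}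
        = {l : Fin n → ℝ | ∃ C : ℝ, ∀ w : Fin n → ℝ, (∀ i, w i ≤ 0) → w ≠ 0 →
            ∑ i, l i * w i ≤ fhat w + C} ∧
      {l : Fin n → ℝ | ∃ C : ℝ, ∀ w : Fin n → ℝ, (∀ i, w i ≤ 0) → w ≠ 0 →
            ∑ i, l i * w i ≤ fhat w + C}
        = {l : Fin n → ℝ | ∀ w : Fin n → ℝ, (∀ i, w i ≤ 0) → w ≠ 0 →
            ∑ i, l i * w i ≤ fhat w} := by
  classical
  -- `a + t • w ∈ C0 n` for `t ≥ 0`, `w ≤ 0`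
  have hmem : ∀ (w : Fin n → ℝ), (∀ i, w i ≤ 0) → ∀ t : ℝ, 0 ≤ t → a + t • w ∈ C0 n := by
    intro w hw t ht
    refine NewtonAux.mem_C0_of_le ha fun i => ?_
    have := mul_nonpos_of_nonneg_of_nonpos ht (hw i)
    simp only [Pi.add_apply, Pi.smul_apply, smul_eq_mul]
    linarith
  -- homogeneity of fhat
  have hhomog : ∀ (w : Fin n → ℝ), (∀ i, w i ≤ 0) → w ≠ 0 → ∀ s : ℝ, 0 < s →
      fhat (s • w) = s * fhat w := by
    intro w hw hw0 s hs
    have hw' : ∀ i, (s • w) i ≤ 0 := fun i => by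
      simpa [smul_eq_mul] using mul_nonpos_of_nonneg_of_nonpos hs.le (hw i)
    have hw0' : s • w ≠ 0 := smul_ne_zero hs.ne' hw0
    have hcomp : Tendsto (fun t : ℝ => t * s) atTop atTop := tendsto_id.atTop_mul_const hs
    have h1 : Tendsto (fun t : ℝ => f (a + (t * s) • w) / (t * s) * s) atTop
        (𝓝 (fhat w * s)) := ((hfhat w hw hw0).comp hcomp).mul_const s
    have h2 : (fun t : ℝ => f (a + (t * s) • w) / (t * s) * s) =ᶠ[atTop]
        (fun t : ℝ => f (a + t • (s • w)) / t) := by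
      filter_upwards [eventually_gt_atTop 0] with t ht
      rw [smul_smul]
      field_simp
    have h3 := h1.congr' h2
    have := tendsto_nhds_unique (hfhat (s • w) hw' hw0') h3
    rw [this, mul_comm]
  -- second equality
  have part2 : {l : Fin n → ℝ | ∃ C : ℝ, ∀ w : Fin n → ℝ, (∀ i, w i ≤ 0) → w ≠ 0 →
            ∑ i, l i * w i ≤ fhat w + C}
        = {l : Fin n → ℝ | ∀ w : Fin n → ℝ, (∀ i, w i ≤ 0) → w ≠ 0 →
            ∑ i, l i * w i ≤ fhat w} := by
    ext l
    simp only [Set.mem_setOf_eq]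
    constructor
    · rintro ⟨C, hC⟩ w hw hw0
      have key : ∀ s : ℝ, 1 ≤ s → ∑ i, l i * w i ≤ fhat w + C / s := by
        intro s hs
        have hs0 : (0:ℝ) < s := by linarith
        have hw' : ∀ i, (s • w) i ≤ 0 := fun i => by
          simpa [smul_eq_mul] using mul_nonpos_of_nonneg_of_nonpos hs0.le (hw i)
        have h1 := hC (s • w) hw' (smul_ne_zero hs0.ne' hw0)
        rw [hhomog w hw hw0 s hs0] at h1
        have h2 : (∑ i, l i * (s • w) i) = s * ∑ i, l i * w i := by
          rw [Finset.mul_sum]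
          exact Finset.sum_congr rfl fun i _ => by simp [smul_eq_mul]; ring
        rw [h2] at h1
        have h3 : s * (fhat w + C / s) = s * fhat w + C := by field_simp
        exact le_of_mul_le_mul_left (by linarith) hs0
      have htend : Tendsto (fun s : ℝ => fhat w + C / s) atTop (𝓝 (fhat w + 0)) := by
        refine tendsto_const_nhds.add ?_
        exact tendsto_const_nhds.div_atTop tendsto_id
      rw [add_zero] at htend
      exact ge_of_tendsto htend (eventually_atTop.2 ⟨1, key⟩)
    · intro h
      exact ⟨0, fun w hw hw0 => by linarith [h w hw hw0]⟩
  -- Γ ⊆ Γ̂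
  have hsub1 : {l : Fin n → ℝ | ∃ C : ℝ, ∀ x ∈ C0 n, ∑ i, l i * x i ≤ f x + C} ⊆
      {l : Fin n → ℝ | ∀ w : Fin n → ℝ, (∀ i, w i ≤ 0) → w ≠ 0 →
            ∑ i, l i * w i ≤ fhat w} := by
    rintro l ⟨C, hC⟩ w hw hw0
    have key : ∀ t : ℝ, 1 ≤ t →
        ∑ i, l i * w i ≤ f (a + t • w) / t + (C - ∑ i, l i * a i) / t := by
      intro t ht
      have ht0 : (0:ℝ) < t := by linarith
      have h1 := hC (a + t • w) (hmem w hw t ht0.le)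
      have h2 : (∑ i, l i * (a + t • w) i) = (∑ i, l i * a i) + t * ∑ i, l i * w i := by
        rw [Finset.mul_sum, ← Finset.sum_add_distrib]
        refine Finset.sum_congr rfl fun i _ => ?_
        simp only [Pi.add_apply, Pi.smul_apply, smul_eq_mul]
        ring
      rw [h2] at h1
      have h3 : t * (f (a + t • w) / t + (C - ∑ i, l i * a i) / t)
          = f (a + t • w) + C - ∑ i, l i * a i := by field_simp; ring
      exact le_of_mul_le_mul_left (by linarith) ht0
    have htend : Tendsto (fun t : ℝ => f (a + t • w) / t + (C - ∑ i, l i * a i) / t)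
        atTop (𝓝 (fhat w + 0)) := by
      refine (hfhat w hw hw0).add ?_
      exact tendsto_const_nhds.div_atTop tendsto_id
    rw [add_zero] at htend
    exact ge_of_tendsto htend (eventually_atTop.2 ⟨1, key⟩)
  -- Γ̂ is closed
  have hclosed : IsClosed {l : Fin n → ℝ | ∀ w : Fin n → ℝ, (∀ i, w i ≤ 0) → w ≠ 0 →
            ∑ i, l i * w i ≤ fhat w} := by
    have heq : {l : Fin n → ℝ | ∀ w : Fin n → ℝ, (∀ i, w i ≤ 0) → w ≠ 0 →
            ∑ i, l i * w i ≤ fhat w}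
        = ⋂ (w : Fin n → ℝ), ⋂ (_ : ∀ i, w i ≤ 0), ⋂ (_ : w ≠ 0),
            {l : Fin n → ℝ | ∑ i, l i * w i ≤ fhat w} := by
      ext l; simp [Set.mem_iInter]
    rw [heq]
    refine isClosed_iInter fun w => isClosed_iInter fun hw => isClosed_iInter fun hw0 => ?_
    exact isClosed_le (continuous_finset_sum _ fun i _ =>
      (continuous_apply i).mul continuous_const) continuous_const
  -- existence of elements of Γ with pairing close to fhat w
  have hgam : ∀ (w : Fin n → ℝ), (∀ i, w i ≤ 0) → w ≠ 0 → ∀ η : ℝ, 0 < η →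
      ∃ l : Fin n → ℝ,
        (l ∈ {l : Fin n → ℝ | ∃ C : ℝ, ∀ x ∈ C0 n, ∑ i, l i * x i ≤ f x + C}) ∧
        fhat w - η ≤ ∑ i, l i * w i := by
    intro w hw hw0 η hη
    have htend : Tendsto (fun t : ℝ => f (a + t • w) / t - f a / t) atTop
        (𝓝 (fhat w - 0)) := by
      refine (hfhat w hw hw0).sub ?_
      exact tendsto_const_nhds.div_atTop tendsto_id
    rw [sub_zero] at htend
    have hev : ∀ᶠ t : ℝ in atTop, fhat w - η < f (a + t • w) / t - f a / t :=
      htend.eventually (eventually_gt_nhds (by linarith))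
    obtain ⟨t, ht2, ht1⟩ := (hev.and (eventually_ge_atTop 1)).exists
    have ht0 : (0:ℝ) < t := by linarith
    obtain ⟨l, hl⟩ := NewtonAux.exists_subgradient f hconv (hmem w hw t ht0.le)
    refine ⟨l, ⟨(∑ i, l i * (a + t • w) i) - f (a + t • w), fun x hx => by
      linarith [hl x hx]⟩, ?_⟩
    have h2 := hl a ha
    have hexp : (∑ i, l i * (a + t • w) i) = (∑ i, l i * a i) + t * ∑ i, l i * w i := by
      rw [Finset.mul_sum, ← Finset.sum_add_distrib]
      refine Finset.sum_congr rfl fun i _ => ?_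
      simp only [Pi.add_apply, Pi.smul_apply, smul_eq_mul]
      ring
    rw [hexp] at h2
    -- h2 : Σ l a - f a ≤ Σ l a + t * Σ l w - f (a + t•w)
    have h4 : f (a + t • w) - f a ≤ t * ∑ i, l i * w i := by linarith
    have h5 : f (a + t • w) / t - f a / t ≤ ∑ i, l i * w i := by
      have h6 : (f (a + t • w) - f a) / t ≤ (t * ∑ i, l i * w i) / t :=
        div_le_div_of_nonneg_right h4 ht0.le
      have h7 : (t * ∑ i, l i * w i) / t = ∑ i, l i * w i := by field_simp
      calc f (a + t • w) / t - f a / t = (f (a + t • w) - f a) / t := by ring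
        _ ≤ (t * ∑ i, l i * w i) / t := h6
        _ = ∑ i, l i * w i := h7
    linarith
  -- hard inclusion : Γ̂ ⊆ closure Γ, by separation
  have hsub2 : {l : Fin n → ℝ | ∀ w : Fin n → ℝ, (∀ i, w i ≤ 0) → w ≠ 0 →
            ∑ i, l i * w i ≤ fhat w} ⊆
      closure {l : Fin n → ℝ | ∃ C : ℝ, ∀ x ∈ C0 n, ∑ i, l i * x i ≤ f x + C} := by
    intro l hl
    by_contra hc
    have hΓconv : Convex ℝ {l : Fin n → ℝ | ∃ C : ℝ, ∀ x ∈ C0 n, ∑ i, l i * x i ≤ f x + C} := by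
      rintro l1 ⟨C1, h1⟩ l2 ⟨C2, h2⟩ α β hα hβ hαβ
      refine ⟨α * C1 + β * C2, fun x hx => ?_⟩
      have e1 : (∑ i, (α • l1 + β • l2) i * x i)
          = α * (∑ i, l1 i * x i) + β * (∑ i, l2 i * x i) := by
        rw [Finset.mul_sum, Finset.mul_sum, ← Finset.sum_add_distrib]
        refine Finset.sum_congr rfl fun i _ => ?_
        simp only [Pi.add_apply, Pi.smul_apply, smul_eq_mul]
        ring
      rw [e1]
      have i1 := mul_le_mul_of_nonneg_left (h1 x hx) hα
      have i2 := mul_le_mul_of_nonneg_left (h2 x hx) hβ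
      have : α * f x + β * f x = f x := by rw [← add_mul, hαβ, one_mul]
      linarith
    obtain ⟨F, u, hF1, hF2⟩ :=
      geometric_hahn_banach_closed_point hΓconv.closure isClosed_closure hc
    set w : Fin n → ℝ := fun i => F (Pi.single i 1) with hwdef
    have hFrep : ∀ y : Fin n → ℝ, F y = ∑ i, y i * w i := fun y => NewtonAux.clm_eq_sum F y
    obtain ⟨l₀, hl₀⟩ := NewtonAux.exists_subgradient f hconv ha
    have hl₀Γ : l₀ ∈ {l : Fin n → ℝ | ∃ C : ℝ, ∀ x ∈ C0 n, ∑ i, l i * x i ≤ f x + C} :=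
      ⟨(∑ i, l₀ i * a i) - f a, fun x hx => by linarith [hl₀ x hx]⟩
    have hwle : ∀ i, w i ≤ 0 := by
      intro i
      by_contra hpos
      push_neg at hpos
      set s : ℝ := max ((u - F l₀) / w i) 0 with hsdef
      have hs0 : 0 ≤ s := le_max_right _ _
      have hmem2 : l₀ + s • (Pi.single i 1 : Fin n → ℝ) ∈
          {l : Fin n → ℝ | ∃ C : ℝ, ∀ x ∈ C0 n, ∑ i, l i * x i ≤ f x + C} := by
        obtain ⟨C, hC⟩ := hl₀Γ
        refine ⟨C, fun x hx => ?_⟩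
        have hxi := NewtonAux.neg_of_mem_C0 hx i
        have hexp : (∑ j, (l₀ + s • (Pi.single i 1 : Fin n → ℝ)) j * x j)
            = (∑ j, l₀ j * x j) + s * x i := by
          have e1 : ∀ j, (l₀ + s • (Pi.single i 1 : Fin n → ℝ)) j * x j
              = l₀ j * x j + s * ((Pi.single i 1 : Fin n → ℝ) j) * x j := by
            intro j
            simp only [Pi.add_apply, Pi.smul_apply, smul_eq_mul]
            ring
          rw [Finset.sum_congr rfl fun j _ => e1 j, Finset.sum_add_distrib]
          congr 1
          rw [Finset.sum_eq_single i]
          · simp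
          · intro j _ hj
            simp [Pi.single_apply, hj]
          · intro h; exact absurd (Finset.mem_univ i) h
        rw [hexp]
        have hsx : s * x i ≤ 0 := mul_nonpos_of_nonneg_of_nonpos hs0 hxi.le
        linarith [hC x hx]
      have h2 := hF1 _ (subset_closure hmem2)
      have h3 : F (l₀ + s • (Pi.single i 1 : Fin n → ℝ)) = F l₀ + s * w i := by
        rw [map_add, F.map_smul, smul_eq_mul]
      have h4 : u - F l₀ ≤ s * w i := by
        have h5 : (u - F l₀) / w i * w i ≤ s * w i :=
          mul_le_mul_of_nonneg_right (le_max_left _ _) hpos.le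
        have h6 : (u - F l₀) / w i * w i = u - F l₀ := by field_simp
        linarith
      rw [h3] at h2
      linarith
    have hwne : w ≠ 0 := by
      intro h0
      have h1 : F l = 0 := by rw [hFrep, h0]; simp
      have h2 : F l₀ = 0 := by rw [hFrep, h0]; simp
      have h3 := hF1 l₀ (subset_closure hl₀Γ)
      rw [h2] at h3
      rw [h1] at hF2
      linarith
    have hlw := hl w hwle hwne
    have hubig : u < fhat w := by
      have := hFrep l
      linarith [hF2]
    obtain ⟨l', hl'Γ, hl'w⟩ := hgam w hwle hwne (fhat w - u) (by linarith)
    have h9 := hF1 l' (subset_closure hl'Γ)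
    rw [hFrep l'] at h9
    linarith
  refine ⟨?_, part2⟩
  rw [part2]
  exact Subset.antisymm (closure_minimal hsub1 hclosed) hsub2

end
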